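/- Fix n ≥ 2, τ ≥ 1, and a unit vector q₀ ∈ ℝⁿ. Let ρ = arctan(√(n-1)/τ). Then there exist unit vectors M₁, M₂ ∈ ℝⁿ with M₁ᵀM₂ = cos(2ρ) such that q₀ᵀM₁ = q₀ᵀM₂ = cos ρ, and any unit vector q with angle at most ρ to both M₁ and M₂ must equal q₀. -/

import Mathlib

open Finset

private lemma sum_expand_aux {n : ℕ} (a b : Fin n → ℝ) (c s : ℝ) :
    ∑ i, (c * a i + s * b i) ^ 2 =
      c ^ 2 * (∑ i, a i ^ 2) + s ^ 2 * (∑ i, b i ^ 2)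
        + 2 * c * s * (∑ i, a i * b i) := by
  simp_rw [Finset.mul_sum, ← Finset.sum_add_distrib]
  exact Finset.sum_congr rfl fun i _ => by ring

private lemma sum_dot_aux {n : ℕ} (x a b : Fin n → ℝ) (c s : ℝ) :
    ∑ i, x i * (c * a i + s * b i) =
      c * (∑ i, x i * a i) + s * (∑ i, x i * b i) := by
  simp_rw [Finset.mul_sum, ← Finset.sum_add_distrib]
  exact Finset.sum_congr rfl fun i _ => by ring

/-- Existence of a unit vector orthogonal to a given unit vector when `n ≥ 2`. -/
private lemma exists_orthonormal {n : ℕ} (hn : 2 ≤ n) (q₀ : Fin n → ℝ)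
    (hq₀ : (∑ i, q₀ i ^ 2) = 1) :
    ∃ w : Fin n → ℝ, (∑ i, w i ^ 2) = 1 ∧ (∑ i, q₀ i * w i) = 0 := by
  classical
  set E := EuclideanSpace ℝ (Fin n)
  have ipeq : ∀ x y : E, (inner ℝ x y : ℝ) = ∑ i, x i * y i := by
    intro x y
    rw [PiLp.inner_apply]
    exact Finset.sum_congr rfl fun i _ => by
      simp [RCLike.inner_apply, starRingEnd_apply, mul_comm]
  let q : E := (WithLp.equiv 2 (Fin n → ℝ)).symm q₀
  have hqc : ∀ i, q i = q₀ i := fun i => rfl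
  have hq0 : q ≠ 0 := by
    intro h
    have : (∑ i, q₀ i ^ 2) = 0 := by
      refine Finset.sum_eq_zero fun i _ => ?_
      have : q i = 0 := by rw [h]; rfl
      rw [← hqc i, this]; ring
    rw [hq₀] at this; norm_num at this
  have hspan : (ℝ ∙ q) ≠ ⊤ := by
    intro h
    have h1 : Module.finrank ℝ (ℝ ∙ q) = 1 := finrank_span_singleton hq0
    have h2 : Module.finrank ℝ E = n := by
      simp [E, finrank_euclideanSpace]
    rw [h, finrank_top] at h1
    rw [h2] at h1
    omega
  have hbot : (ℝ ∙ q)ᗮ ≠ ⊥ := by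
    intro h
    exact hspan (Submodule.orthogonal_eq_bot_iff.mp h)
  obtain ⟨v, hv, hv0⟩ := (Submodule.ne_bot_iff _).mp hbot
  have hvq : (inner ℝ q v : ℝ) = 0 :=
    (Submodule.mem_orthogonal _ _).mp hv q (Submodule.mem_span_singleton_self q)
  refine ⟨fun i => ‖v‖⁻¹ * v i, ?_, ?_⟩
  · have hnv : ‖v‖ ≠ 0 := norm_ne_zero_iff.mpr hv0
    have : (∑ i, v i * v i) = ‖v‖ ^ 2 := by
      rw [← ipeq v v, real_inner_self_eq_norm_sq]
    have h2 : ∑ i, (‖v‖⁻¹ * v i) ^ 2 = ‖v‖⁻¹ ^ 2 * ∑ i, v i * v i := by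
      rw [Finset.mul_sum]; exact Finset.sum_congr rfl fun i _ => by ring
    rw [h2, this]
    field_simp
  · have : (∑ i, q₀ i * v i) = 0 := by rw [ipeq] at hvq; exact hvq
    calc ∑ i, q₀ i * (‖v‖⁻¹ * v i) = ‖v‖⁻¹ * ∑ i, q₀ i * v i := by
          rw [Finset.mul_sum]; exact Finset.sum_congr rfl fun i _ => by ring
      _ = 0 := by rw [this, mul_zero]

open Finset in
theorem point_identification_construction
    (n : ℕ) (hn : 2 ≤ n) (τ : ℝ) (hτ : 1 ≤ τ)
    (q₀ : Fin n → ℝ) (hq₀ : (∑ i, q₀ i ^ 2) = 1) :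
    ∃ M₁ M₂ : Fin n → ℝ,
      (∑ i, M₁ i ^ 2) = 1 ∧ (∑ i, M₂ i ^ 2) = 1 ∧
      (∑ i, M₁ i * M₂ i) =
        Real.cos (2 * Real.arctan (Real.sqrt ((n : ℝ) - 1) / τ)) ∧
      (∑ i, q₀ i * M₁ i) = Real.cos (Real.arctan (Real.sqrt ((n : ℝ) - 1) / τ)) ∧
      (∑ i, q₀ i * M₂ i) = Real.cos (Real.arctan (Real.sqrt ((n : ℝ) - 1) / τ)) ∧
      ∀ q : Fin n → ℝ, (∑ i, q i ^ 2) = 1 →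
        Real.arccos (∑ i, q i * M₁ i) ≤ Real.arctan (Real.sqrt ((n : ℝ) - 1) / τ) →
        Real.arccos (∑ i, q i * M₂ i) ≤ Real.arctan (Real.sqrt ((n : ℝ) - 1) / τ) →
        q = q₀ := by
  obtain ⟨w, hw1, hw2⟩ := exists_orthonormal hn q₀ hq₀
  set ρ := Real.arctan (Real.sqrt ((n : ℝ) - 1) / τ) with hρ
  set c := Real.cos ρ with hc
  set s := Real.sin ρ with hs
  have hcs : s ^ 2 + c ^ 2 = 1 := Real.sin_sq_add_cos_sq ρ
  have hcpos : 0 < c := by rw [hc, hρ, Real.cos_arctan]; positivity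
  have hρπ : ρ ≤ Real.pi := le_of_lt (lt_trans (Real.arctan_lt_pi_div_two _)
    (by linarith [Real.pi_pos]))
  have hq₀' : (∑ i, q₀ i * q₀ i) = 1 := by
    rw [← hq₀]; exact Finset.sum_congr rfl fun i _ => (sq (q₀ i)).symm
  refine ⟨fun i => c * q₀ i + s * w i, fun i => c * q₀ i + (-s) * w i, ?_, ?_, ?_, ?_, ?_, ?_⟩
  · rw [sum_expand_aux, hq₀, hw1, hw2]; ring_nf; linarith
  · rw [sum_expand_aux, hq₀, hw1, hw2]; ring_nf; linarith
  · have : ∑ i, (c * q₀ i + s * w i) * (c * q₀ i + (-s) * w i)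
        = c ^ 2 * (∑ i, q₀ i ^ 2) + (-(s^2)) * (∑ i, w i ^ 2) := by
      simp_rw [Finset.mul_sum, ← Finset.sum_add_distrib]
      exact Finset.sum_congr rfl fun i _ => by ring
    rw [this, hq₀, hw1, Real.cos_two_mul, ← hc]
    nlinarith
  · rw [sum_dot_aux, hq₀', hw2]; ring
  · rw [sum_dot_aux, hq₀', hw2]; ring
  · intro q hq h1 h2
    -- Cauchy–Schwarz bounds
    have cs1 : (∑ i, q i * (c * q₀ i + s * w i)) ^ 2 ≤ 1 := by
      have := Finset.sum_mul_sq_le_sq_mul_sq Finset.univ q (fun i => c * q₀ i + s * w i)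
      have hM : ∑ i, (c * q₀ i + s * w i) ^ 2 = 1 := by
        rw [sum_expand_aux, hq₀, hw1, hw2]; ring_nf; linarith
      calc (∑ i, q i * (c * q₀ i + s * w i)) ^ 2
          ≤ (∑ i, q i ^ 2) * ∑ i, (c * q₀ i + s * w i) ^ 2 := this
        _ = 1 := by rw [hq, hM, one_mul]
    have cs2 : (∑ i, q i * (c * q₀ i + (-s) * w i)) ^ 2 ≤ 1 := by
      have := Finset.sum_mul_sq_le_sq_mul_sq Finset.univ q (fun i => c * q₀ i + (-s) * w i)
      have hM : ∑ i, (c * q₀ i + (-s) * w i) ^ 2 = 1 := by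
        rw [sum_expand_aux, hq₀, hw1, hw2]; ring_nf; linarith
      calc (∑ i, q i * (c * q₀ i + (-s) * w i)) ^ 2
          ≤ (∑ i, q i ^ 2) * ∑ i, (c * q₀ i + (-s) * w i) ^ 2 := this
        _ = 1 := by rw [hq, hM, one_mul]
    have habs1 : -1 ≤ (∑ i, q i * (c * q₀ i + s * w i)) ∧
        (∑ i, q i * (c * q₀ i + s * w i)) ≤ 1 := ⟨by nlinarith, by nlinarith⟩
    have habs2 : -1 ≤ (∑ i, q i * (c * q₀ i + (-s) * w i)) ∧
        (∑ i, q i * (c * q₀ i + (-s) * w i)) ≤ 1 := ⟨by nlinarith, by nlinarith⟩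
    -- from arccos bounds to inner product lower bounds
    have key1 : c ≤ ∑ i, q i * (c * q₀ i + s * w i) := by
      have := Real.cos_le_cos_of_nonneg_of_le_pi (Real.arccos_nonneg _) hρπ h1
      rwa [Real.cos_arccos habs1.1 habs1.2] at this
    have key2 : c ≤ ∑ i, q i * (c * q₀ i + (-s) * w i) := by
      have := Real.cos_le_cos_of_nonneg_of_le_pi (Real.arccos_nonneg _) hρπ h2
      rwa [Real.cos_arccos habs2.1 habs2.2] at this
    rw [sum_dot_aux] at key1 key2
    have hqq₀ : 1 ≤ ∑ i, q i * q₀ i := by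
      have h3 : c * 1 ≤ c * (∑ i, q i * q₀ i) := by linarith
      exact (mul_le_mul_iff_right₀ hcpos).mp h3
    -- conclude q = q₀
    have hzero : ∑ i, (q i - q₀ i) ^ 2 = 0 := by
      have expand : ∑ i, (q i - q₀ i) ^ 2
          = (∑ i, q i ^ 2) + (∑ i, q₀ i ^ 2) - 2 * (∑ i, q i * q₀ i) := by
        rw [Finset.mul_sum, ← Finset.sum_add_distrib, ← Finset.sum_sub_distrib]
        exact Finset.sum_congr rfl fun i _ => by ring
      rw [expand, hq, hq₀]
      have hle : ∑ i, q i * q₀ i ≤ 1 := by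
        have := Finset.sum_mul_sq_le_sq_mul_sq Finset.univ q q₀
        rw [hq, hq₀, one_mul] at this
        nlinarith
      linarith
    funext i
    have := (Finset.sum_eq_zero_iff_of_nonneg (fun i _ => sq_nonneg (q i - q₀ i))).mp hzero
      i (Finset.mem_univ i)
    have := sq_eq_zero_iff.mp this
    linarith
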